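/- In BTA with instructions for Boolean registers, the three axioms BTAbr1 (x ◁ f.F/q ▷ y = y ◁ f.T/q ▷ x), BTAbr2 (x ◁ f.I/q ▷ y = y ◁ f.C/q ▷ x), and BTAbr3 (x ◁ f.T/q ▷ y = x ◁ f.p/q ▷ x) are sound for the semantics in which a state is an assignment of Booleans to foci, performing instruction f.p/q in state σ replaces σ(f) by q(σ(f)) and yields reply p(σ(f)), and two threads are identified when, from every initial state, they induce the same state transformations and the same continuation behaviour at every step. -/
import Mathlib


/-- The four unary Boolean functions. -/
def Ffun : Bool → Bool := fun _ => false
def Tfun : Bool → Bool := fun _ => true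
def Ifun : Bool → Bool := fun b => b
def Cfun : Bool → Bool := fun b => !b

/-- BTAbr threads over a set `F` of foci: `D`, `S`, and postconditional
composition over basic instructions `f.p/q` (focus `f`, reply function
`p`, update function `q`). -/
inductive Thr (F : Type) where
  | D : Thr F
  | S : Thr F
  | pcc : Thr F → F × (Bool → Bool) × (Bool → Bool) → Thr F → Thr F

/-- Executions: inaction, termination, or a step producing a new state. -/
inductive Run (St : Type) where
  | dead : Run St
  | term : Run St
  | step : St → Run St → Run St

/-- The execution induced by a thread from a state: `D` gives inaction,
`S` gives termination, and `x ◁ f.p/q ▷ y` in state `σ` updates `σ f` to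
`q (σ f)` and continues with `x` if `p (σ f) = true`, with `y`
otherwise. -/
def beh {F : Type} [DecidableEq F] : Thr F → (F → Bool) → Run (F → Bool)
  | .D, _ => .dead
  | .S, _ => .term
  | .pcc x (f, p, q) y, σ =>
      let σ' := Function.update σ f (q (σ f))
      .step σ' (if p (σ f) then beh x σ' else beh y σ')

/-- Semantic equality of threads: identical executions from every initial
state. -/
def SemEq {F : Type} [DecidableEq F] (x y : Thr F) : Prop :=
  ∀ σ : F → Bool, beh x σ = beh y σ

/-- Soundness of the axioms BTAbr1–BTAbr3 for the Boolean-register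
semantics. -/
theorem btabr_axioms_sound {F : Type} [DecidableEq F]
    (x y : Thr F) (f : F) (q : Bool → Bool) :
    SemEq (.pcc x (f, Ffun, q) y) (.pcc y (f, Tfun, q) x) ∧
    SemEq (.pcc x (f, Ifun, q) y) (.pcc y (f, Cfun, q) x) ∧
    (∀ p : Bool → Bool, SemEq (.pcc x (f, Tfun, q) y) (.pcc x (f, p, q) x)) := by
  refine ⟨fun σ => ?_, fun σ => ?_, fun p σ => ?_⟩ <;>
    simp [beh, Ffun, Tfun, Ifun, Cfun] <;> cases σ f <;> simp
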